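/- Let (U, ≤) be a finite partially ordered set with U = {u_0,…,u_{n−1}}. For a, b ∈ U, the natural embedding from OCat(b) to OCat(a) exists if and only if a ≤ b; moreover, when it exists, it is a minor embedding of OCat(a) in OCat(b). -/

import Mathlib

/-- A minor embedding of `P` in `T`: a surjective `f : V(T) → V(P)` with connected preimages
of vertices such that every edge of `P` is realized by an edge of `T`. -/
def IsMinorEmbedding {V W : Type*} (T : SimpleGraph V) (P : SimpleGraph W) (f : V → W) : Prop :=
  Function.Surjective f ∧
  (∀ w : W, ((T.induce (f ⁻¹' {w})).Connected)) ∧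
  (∀ ⦃u v : W⦄, P.Adj u v → ∃ u' v', T.Adj u' v' ∧ f u' = u ∧ f v' = v)

/-- Vertices of the order caterpillar `OCat(a)`: spine vertices `v_0ᵃ,…,v_{n+1}ᵃ`
(`Sum.inl`) and a pendant leaf `l_iᵃ` for each `i < n` with `u_i ≤ a` (`Sum.inr`). -/
def OCatVert {α : Type*} [PartialOrder α] (n : ℕ) (u : Fin n → α) (a : α) : Type _ :=
  Fin (n + 2) ⊕ {i : Fin n // u i ≤ a}

/-- Base adjacency of `OCat(a)`: consecutive spine vertices are adjacent, and the leaf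
`l_iᵃ` is attached to the spine vertex `v_iᵃ`. -/
def OCatRel {α : Type*} [PartialOrder α] (n : ℕ) (u : Fin n → α) (a : α) :
    OCatVert n u a → OCatVert n u a → Prop
  | .inl i, .inl j => (j : ℕ) = (i : ℕ) + 1
  | .inl i, .inr j => (i : ℕ) = (j.1 : ℕ)
  | _, _ => False

/-- The order caterpillar `OCat(a)`. -/
def OCat {α : Type*} [PartialOrder α] (n : ℕ) (u : Fin n → α) (a : α) :
    SimpleGraph (OCatVert n u a) :=
  SimpleGraph.fromRel (OCatRel n u a)

open Classical in
/-- The natural embedding from `OCat(b)` to `OCat(a)`: spine vertices map to spine vertices,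
and `l_iᵇ` maps to `l_iᵃ` when `u_i ≤ a` and to the spine vertex `v_iᵃ` otherwise. -/
noncomputable def naturalEmb {α : Type*} [PartialOrder α] (n : ℕ) (u : Fin n → α) (a b : α) :
    OCatVert n u b → OCatVert n u a
  | .inl i => .inl i
  | .inr j => if h : u j.1 ≤ a then .inr ⟨j.1, h⟩ else .inl (Fin.castLE (by omega) j.1)

/-- For a finite poset `U = {u_0,…,u_{n−1}}` and `a, b ∈ U`: the natural embedding from
`OCat(b)` to `OCat(a)` exists (i.e. `u_i ≤ a` implies `u_i ≤ b` for all `i`) if and only if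
`a ≤ b`; moreover, when it exists, it is a minor embedding of `OCat(a)` in `OCat(b)`. -/
theorem stmt_7 {α : Type*} [PartialOrder α] [Fintype α] (n : ℕ) (u : Fin n → α)
    (hu : Function.Surjective u) (a b : α) :
    ((∀ i : Fin n, u i ≤ a → u i ≤ b) ↔ a ≤ b) ∧
    ((∀ i : Fin n, u i ≤ a → u i ≤ b) →
      IsMinorEmbedding (OCat n u b) (OCat n u a) (naturalEmb n u a b)) := by
  constructor
  · constructor
    · intro h
      obtain ⟨i, rfl⟩ := hu a
      exact h i le_rfl
    · intro h i hi
      exact hi.trans h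
  · intro hab
    refine ⟨?_, ?_, ?_⟩
    · rintro (i | ⟨j, hj⟩)
      · exact ⟨.inl i, rfl⟩
      · exact ⟨.inr ⟨j, hab j hj⟩, by simp [naturalEmb, hj]; rfl⟩
    · rintro (i | ⟨i, hi⟩)
      · have hc : Sum.inl i ∈ (naturalEmb n u a b) ⁻¹' {Sum.inl i} := by
          rfl
        set s := (naturalEmb n u a b) ⁻¹' {Sum.inl (α := Fin (n+2)) i}
        have key : ∀ x : ↥s, ((OCat n u b).induce s).Reachable x ⟨_, hc⟩ := by
          rintro ⟨(k | ⟨j, hj⟩), hx⟩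
          · have h1 : (Sum.inl k : OCatVert n u a) = Sum.inl i := hx
            have hki : k = i := Sum.inl_injective h1
            subst hki
            exact SimpleGraph.Reachable.refl _
          · have hmem : (naturalEmb n u a b) (Sum.inr ⟨j, hj⟩) = Sum.inl i := hx
            have hja : ¬ u j ≤ a := by
              intro h
              simp [naturalEmb, h] at hmem
            rw [show naturalEmb n u a b (Sum.inr ⟨j, hj⟩) = Sum.inl (Fin.castLE (by omega) j) from dif_neg hja] at hmem
            have h2 : (Fin.castLE (by omega) j : Fin (n+2)) = i := Sum.inl_injective hmem
            have hji : (i : ℕ) = (j : ℕ) := by rw [← h2]; rfl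
            refine SimpleGraph.Adj.reachable ?_
            refine SimpleGraph.comap_adj.mpr ?_
            simp only [Function.Embedding.coe_subtype]
            exact (SimpleGraph.fromRel_adj _ _ _).mpr ⟨Sum.inr_ne_inl, Or.inr hji⟩
        haveI : Nonempty ↥s := ⟨⟨_, hc⟩⟩
        exact SimpleGraph.Connected.mk (fun x y => (key x).trans (key y).symm)
      · have hbi : u i ≤ b := hab i hi
        have hc : Sum.inr ⟨i, hbi⟩ ∈ (naturalEmb n u a b) ⁻¹' {Sum.inr (⟨i, hi⟩ : {i : Fin n // u i ≤ a})} := by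
          exact dif_pos hi
        set s := (naturalEmb n u a b) ⁻¹' {Sum.inr (⟨i, hi⟩ : {i : Fin n // u i ≤ a})}
        have key : ∀ x : ↥s, x = ⟨_, hc⟩ := by
          rintro ⟨(k | ⟨j, hj⟩), hx⟩
          · exact absurd hx (fun h => Sum.inl_ne_inr h)
          · have hmem : (naturalEmb n u a b) (Sum.inr ⟨j, hj⟩) = Sum.inr ⟨i, hi⟩ := hx
            by_cases hja : u j ≤ a
            · rw [show naturalEmb n u a b (Sum.inr ⟨j, hj⟩) = Sum.inr ⟨j, hja⟩ from dif_pos hja] at hmem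
              have hji : j = i := Subtype.mk_eq_mk.mp (Sum.inr_injective hmem)
              exact Subtype.ext (by subst hji; rfl)
            · simp [naturalEmb, hja] at hmem
        haveI : Nonempty ↥s := ⟨⟨_, hc⟩⟩
        exact SimpleGraph.Connected.mk (fun x y => by rw [key x, key y])
    · intro x y hxy
      rw [OCat, SimpleGraph.fromRel_adj] at hxy
      obtain ⟨hne, h | h⟩ := hxy
      · match x, y, h with
        | .inl i, .inl j, h =>
          refine ⟨.inl i, .inl j, ?_, rfl, rfl⟩
          refine (SimpleGraph.fromRel_adj _ _ _).mpr ⟨?_, Or.inl h⟩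
          have h' : (j : ℕ) = (i : ℕ) + 1 := h
          intro hij
          have := congrArg Fin.val (Sum.inl_injective hij)
          omega
        | .inl i, .inr ⟨j, hj⟩, h =>
          refine ⟨.inl i, .inr ⟨j, hab j hj⟩, ?_, rfl, by simp [naturalEmb, hj]; rfl⟩
          exact (SimpleGraph.fromRel_adj _ _ _).mpr ⟨Sum.inl_ne_inr, Or.inl h⟩
      · match x, y, h with
        | .inl j, .inl i, h =>
          refine ⟨.inl j, .inl i, ?_, rfl, rfl⟩
          refine (SimpleGraph.fromRel_adj _ _ _).mpr ⟨?_, Or.inr h⟩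
          have h' : (j : ℕ) = (i : ℕ) + 1 := h
          intro hij
          have := congrArg Fin.val (Sum.inl_injective hij)
          omega
        | .inr ⟨j, hj⟩, .inl i, h =>
          refine ⟨.inr ⟨j, hab j hj⟩, .inl i, ?_, by simp [naturalEmb, hj]; rfl, rfl⟩
          exact (SimpleGraph.fromRel_adj _ _ _).mpr ⟨Sum.inr_ne_inl, Or.inr h⟩
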